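/- Let n ∈ ℕ, let q be a real number with 0 < q < 1, and let H = ℓ²(ℕⁿ × ℤ) with standard orthonormal basis {e_k : k = (k₀, …, kₙ) ∈ ℕⁿ × ℤ}. Then there exist bounded linear operators Z₀, …, Zₙ on H determined on basis vectors by: Z₀ e_{(k₀, …, kₙ)} = √(1 − q^{2(k₀+1)}) e_{(k₀+1, k₁, …, kₙ)}; Z_i e_{(k₀, …, kₙ)} = q^{k₀+⋯+k_{i−1}} √(1 − q^{2(k_i+1)}) e_{(k₀, …, k_i+1, …, kₙ)} for 0 < i < n; and Zₙ e_{(k₀, …, kₙ)} = q^{k₀+⋯+k_{n−1}} e_{(k₀, …, k_{n−1}, kₙ+1)}; and these operators satisfy the q-sphere relations in the C*-algebra B(H). -/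

import Mathlib

open Finset

/-- The Hilbert space `ℓ²(ℕⁿ × ℤ)`. -/
abbrev QSphereL2 (n : ℕ) : Type :=
  lp (fun _ : (Fin n → ℕ) × ℤ => ℂ) 2

/-- The standard basis vector `e k` of `ℓ²(ℕⁿ × ℤ)`. -/
noncomputable abbrev QSphereL2.e {n : ℕ} (k : (Fin n → ℕ) × ℤ) : QSphereL2 n :=
  lp.single 2 k (1 : ℂ)

open scoped ENNReal
set_option linter.unusedSectionVars false

namespace QAux

variable {ι : Type*} [DecidableEq ι]

/-- Specification for a weighted-shift operator: `σ` is the shift, `τ` its partial inverse,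
`u` the (real) weights, bounded by `1` in absolute value. -/
structure Spec (σ : ι → ι) (τ : ι → Option ι) (u : ι → ℝ) : Prop where
  hu0 : ∀ k, 0 ≤ u k
  hu1 : ∀ k, u k ≤ 1
  hτσ : ∀ m, τ (σ m) = some m
  hστ : ∀ k m, τ k = some m → σ m = k

variable {σ : ι → ι} {τ : ι → Option ι} {u : ι → ℝ}

theorem Spec.inj (h : Spec σ τ u) : Function.Injective σ := by
  intro a b hab
  have ha := h.hτσ a
  rw [hab, h.hτσ] at ha
  exact (Option.some_injective _ ha).symm

theorem Spec.tau_none (h : Spec σ τ u) {k : ι} (hk : k ∉ Set.range σ) : τ k = none := by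
  cases ht : τ k with
  | none => rfl
  | some m => exact absurd ⟨m, h.hστ k m ht⟩ hk

/-- The underlying function of the weighted shift. -/
def Tfun (τ : ι → Option ι) (u : ι → ℝ) (f : ι → ℂ) : ι → ℂ :=
  fun k => (τ k).elim 0 fun m => (u m : ℂ) * f m

/-- The underlying function of the adjoint of the weighted shift. -/
def Sfun (σ : ι → ι) (u : ι → ℝ) (f : ι → ℂ) : ι → ℂ :=
  fun m => (u m : ℂ) * f (σ m)

theorem Tfun_apply_sig (h : Spec σ τ u) (f : ι → ℂ) (m : ι) :
    Tfun τ u f (σ m) = (u m : ℂ) * f m := by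
  simp [Tfun, h.hτσ m]

theorem Tfun_eq_zero (h : Spec σ τ u) (f : ι → ℂ) {k : ι} (hk : k ∉ Set.range σ) :
    Tfun τ u f k = 0 := by
  simp [Tfun, h.tau_none hk]

theorem norm_coe_mul_le (h : Spec σ τ u) (m : ι) (c : ℂ) : ‖(u m : ℂ) * c‖ ≤ ‖c‖ := by
  rw [norm_mul]
  refine mul_le_of_le_one_left (norm_nonneg _) ?_
  rw [Complex.norm_real, Real.norm_eq_abs, abs_of_nonneg (h.hu0 m)]
  exact h.hu1 m

theorem two_toReal : (0:ℝ) < (2 : ℝ≥0∞).toReal := by norm_num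

theorem summable_T_comp (h : Spec σ τ u) {f : ι → ℂ} (hf : Memℓp f 2) :
    Summable fun m => ‖Tfun τ u f (σ m)‖ ^ (2 : ℝ≥0∞).toReal := by
  refine Summable.of_nonneg_of_le (fun m => Real.rpow_nonneg (norm_nonneg _) _)
    (fun m => ?_) (hf.summable two_toReal)
  refine Real.rpow_le_rpow (norm_nonneg _) ?_ (le_of_lt two_toReal)
  rw [Tfun_apply_sig h]
  exact norm_coe_mul_le h m (f m)

theorem memℓp_T (h : Spec σ τ u) {f : ι → ℂ} (hf : Memℓp f 2) : Memℓp (Tfun τ u f) 2 := by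
  apply memℓp_gen
  have hvan : ∀ k ∉ Set.range σ, ‖Tfun τ u f k‖ ^ (2 : ℝ≥0∞).toReal = 0 := by
    intro k hk
    rw [Tfun_eq_zero h f hk, norm_zero, Real.zero_rpow (ne_of_gt two_toReal)]
  exact (h.inj.summable_iff hvan).1 (summable_T_comp h hf)

theorem memℓp_S (h : Spec σ τ u) {f : ι → ℂ} (hf : Memℓp f 2) : Memℓp (Sfun σ u f) 2 := by
  apply memℓp_gen
  refine Summable.of_nonneg_of_le (fun m => Real.rpow_nonneg (norm_nonneg _) _)
    (fun m => ?_) ((hf.summable two_toReal).comp_injective h.inj)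
  exact Real.rpow_le_rpow (norm_nonneg _) (norm_coe_mul_le h m _) (le_of_lt two_toReal)

theorem Tfun_add (f g : ι → ℂ) : Tfun τ u (f + g) = Tfun τ u f + Tfun τ u g := by
  funext k
  simp only [Tfun, Pi.add_apply]
  cases τ k with
  | none => simp
  | some m => simp; ring

theorem Tfun_smul (c : ℂ) (f : ι → ℂ) : Tfun τ u (c • f) = c • Tfun τ u f := by
  funext k
  simp only [Tfun, Pi.smul_apply, smul_eq_mul]
  cases τ k with
  | none => simp
  | some m => simp; ring

theorem norm_T_le (h : Spec σ τ u) (f : lp (fun _ : ι => ℂ) 2) :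
    ‖(⟨Tfun τ u ⇑f, memℓp_T h (lp.memℓp f)⟩ : lp (fun _ : ι => ℂ) 2)‖ ≤ ‖f‖ := by
  refine lp.norm_le_of_tsum_le two_toReal (norm_nonneg _) ?_
  show ∑' k, ‖Tfun τ u (⇑f) k‖ ^ (2 : ℝ≥0∞).toReal ≤ ‖f‖ ^ (2 : ℝ≥0∞).toReal
  have hsupp : (Function.support fun k => ‖Tfun τ u (⇑f) k‖ ^ (2 : ℝ≥0∞).toReal)
      ⊆ Set.range σ := by
    intro k hk
    by_contra hkr
    apply hk
    show ‖Tfun τ u (⇑f) k‖ ^ (2 : ℝ≥0∞).toReal = 0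
    rw [Tfun_eq_zero h _ hkr, norm_zero, Real.zero_rpow (ne_of_gt two_toReal)]
  rw [← h.inj.tsum_eq hsupp]
  calc ∑' m, ‖Tfun τ u (⇑f) (σ m)‖ ^ (2 : ℝ≥0∞).toReal
      ≤ ∑' m, ‖f m‖ ^ (2 : ℝ≥0∞).toReal := by
        refine Summable.tsum_le_tsum (fun m => ?_) (summable_T_comp h (lp.memℓp f))
          ((lp.memℓp f).summable two_toReal)
        refine Real.rpow_le_rpow (norm_nonneg _) ?_ (le_of_lt two_toReal)
        rw [Tfun_apply_sig h]
        exact norm_coe_mul_le h m (f m)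
    _ = ‖f‖ ^ (2 : ℝ≥0∞).toReal := (lp.norm_rpow_eq_tsum two_toReal f).symm

theorem norm_S_le (h : Spec σ τ u) (f : lp (fun _ : ι => ℂ) 2) :
    ‖(⟨Sfun σ u ⇑f, memℓp_S h (lp.memℓp f)⟩ : lp (fun _ : ι => ℂ) 2)‖ ≤ ‖f‖ := by
  refine lp.norm_le_of_tsum_le two_toReal (norm_nonneg _) ?_
  show ∑' m, ‖Sfun σ u (⇑f) m‖ ^ (2 : ℝ≥0∞).toReal ≤ ‖f‖ ^ (2 : ℝ≥0∞).toReal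
  have hcomp : Summable fun m => ‖f (σ m)‖ ^ (2 : ℝ≥0∞).toReal :=
    ((lp.memℓp f).summable two_toReal).comp_injective h.inj
  calc ∑' m, ‖Sfun σ u (⇑f) m‖ ^ (2 : ℝ≥0∞).toReal
      ≤ ∑' m, ‖f (σ m)‖ ^ (2 : ℝ≥0∞).toReal := by
        refine Summable.tsum_le_tsum (fun m => ?_)
          (Summable.of_nonneg_of_le (fun m => Real.rpow_nonneg (norm_nonneg _) _)
            (fun m => Real.rpow_le_rpow (norm_nonneg _) (norm_coe_mul_le h m _)
              (le_of_lt two_toReal)) hcomp) hcomp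
        exact Real.rpow_le_rpow (norm_nonneg _) (norm_coe_mul_le h m _)
          (le_of_lt two_toReal)
    _ ≤ ∑' k, ‖f k‖ ^ (2 : ℝ≥0∞).toReal :=
        Summable.tsum_le_tsum_of_inj σ h.inj
          (fun k _ => Real.rpow_nonneg (norm_nonneg _) _) (fun m => le_rfl)
          hcomp ((lp.memℓp f).summable two_toReal)
    _ = ‖f‖ ^ (2 : ℝ≥0∞).toReal := (lp.norm_rpow_eq_tsum two_toReal f).symm

/-- The weighted shift as a continuous linear map on `ℓ²`. -/
noncomputable def Top (h : Spec σ τ u) :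
    lp (fun _ : ι => ℂ) 2 →L[ℂ] lp (fun _ : ι => ℂ) 2 :=
  LinearMap.mkContinuous
    { toFun := fun f => (⟨Tfun τ u ⇑f, memℓp_T h (lp.memℓp f)⟩ : lp (fun _ : ι => ℂ) 2)
      map_add' := fun f g => lp.ext (by
        simp only [lp.coeFn_add]
        exact Tfun_add _ _)
      map_smul' := fun c f => lp.ext (by
        simp only [lp.coeFn_smul, RingHom.id_apply]
        exact Tfun_smul c _) }
    1
    (fun f => by rw [one_mul]; exact norm_T_le h f)

/-- The adjoint of the weighted shift as a continuous linear map on `ℓ²`. -/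
noncomputable def Sop (h : Spec σ τ u) :
    lp (fun _ : ι => ℂ) 2 →L[ℂ] lp (fun _ : ι => ℂ) 2 :=
  LinearMap.mkContinuous
    { toFun := fun f => (⟨Sfun σ u ⇑f, memℓp_S h (lp.memℓp f)⟩ : lp (fun _ : ι => ℂ) 2)
      map_add' := fun f g => lp.ext (by
        simp only [lp.coeFn_add]
        funext m
        simp [Sfun]
        ring)
      map_smul' := fun c f => lp.ext (by
        simp only [lp.coeFn_smul, RingHom.id_apply]
        funext m
        simp [Sfun]
        ring) }
    1
    (fun f => by rw [one_mul]; exact norm_S_le h f)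

@[simp] theorem Top_apply (h : Spec σ τ u) (f : lp (fun _ : ι => ℂ) 2) (k : ι) :
    (Top h f : ι → ℂ) k = (τ k).elim 0 fun m => (u m : ℂ) * f m := rfl

@[simp] theorem Sop_apply (h : Spec σ τ u) (f : lp (fun _ : ι => ℂ) 2) (m : ι) :
    (Sop h f : ι → ℂ) m = (u m : ℂ) * f (σ m) := rfl

theorem star_Top (h : Spec σ τ u) : star (Top h) = Sop h := by
  rw [ContinuousLinearMap.star_eq_adjoint]
  symm
  rw [ContinuousLinearMap.eq_adjoint_iff]
  intro f g
  rw [lp.inner_eq_tsum, lp.inner_eq_tsum]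
  have hsupp : (Function.support fun k => (inner ℂ (f k) ((Top h g : ι → ℂ) k) : ℂ))
      ⊆ Set.range σ := by
    intro k hk
    by_contra hkr
    apply hk
    have h0 : (Top h g : ι → ℂ) k = 0 := Tfun_eq_zero h _ hkr
    show (inner ℂ (f k) ((Top h g : ι → ℂ) k) : ℂ) = 0
    rw [h0, inner_zero_right]
  rw [← h.inj.tsum_eq hsupp]
  refine tsum_congr fun m => ?_
  have h1 : (Top h g : ι → ℂ) (σ m) = (u m : ℂ) * g m := Tfun_apply_sig h _ m
  rw [h1, Sop_apply]
  simp only [RCLike.inner_apply, map_mul, Complex.conj_ofReal]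
  ring

theorem Top_single (h : Spec σ τ u) (k : ι) :
    Top h (lp.single 2 k 1) = (u k : ℂ) • lp.single 2 (σ k) 1 := by
  apply lp.ext
  funext m
  rw [lp.coeFn_smul, Pi.smul_apply, Top_apply, smul_eq_mul]
  rcases eq_or_ne m (σ k) with rfl | hm
  · rw [h.hτσ k]
    simp [lp.single_apply_self]
  · have h2 : ((lp.single 2 (σ k) (1:ℂ) : lp (fun _ : ι => ℂ) 2) : ι → ℂ) m = 0 :=
      lp.single_apply_ne (E := fun _ : ι => ℂ) 2 (σ k) (1:ℂ) hm
    rw [h2, mul_zero]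
    cases ht : τ m with
    | none => rfl
    | some m' =>
      have hσ : σ m' = m := h.hστ m m' ht
      have hne : m' ≠ k := fun hh => hm (by rw [← hσ, hh])
      simp [lp.single_apply_ne (E := fun _ : ι => ℂ) 2 k (1:ℂ) hne, Pi.single_apply, hne]

end QAux

namespace QSphereProof

open QAux

/-- Partial sums of the exponents. -/
def Sf (n : ℕ) (x : Fin n → ℕ) (t : ℕ) : ℕ :=
  ∑ m ∈ univ.filter (fun m : Fin n => (m : ℕ) < t), x m

/-- The shift map on the index set. -/
def sig (n : ℕ) (i : Fin (n + 1)) (k : (Fin n → ℕ) × ℤ) : (Fin n → ℕ) × ℤ :=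
  if h : (i : ℕ) < n then (Function.update k.1 ⟨i, h⟩ (k.1 ⟨i, h⟩ + 1), k.2)
  else (k.1, k.2 + 1)

/-- The partial inverse of the shift map. -/
def tau (n : ℕ) (i : Fin (n + 1)) (k : (Fin n → ℕ) × ℤ) : Option ((Fin n → ℕ) × ℤ) :=
  if h : (i : ℕ) < n then
    (if k.1 ⟨i, h⟩ = 0 then none
      else some (Function.update k.1 ⟨i, h⟩ (k.1 ⟨i, h⟩ - 1), k.2))
  else some (k.1, k.2 - 1)

/-- The weights. -/
noncomputable def wt (n : ℕ) (q : ℝ) (i : Fin (n + 1)) (k : (Fin n → ℕ) × ℤ) : ℝ :=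
  if h : (i : ℕ) < n then q ^ (Sf n k.1 i) * Real.sqrt (1 - q ^ (2 * (k.1 ⟨i, h⟩ + 1)))
  else q ^ (Sf n k.1 n)

/-- Telescoping auxiliary function. -/
noncomputable def Gf (n : ℕ) (q : ℝ) (x : Fin n → ℕ) (t : ℕ) : ℝ :=
  if t ≤ n then q ^ (2 * Sf n x t) else 0

section lems

variable {n : ℕ} {q : ℝ}

lemma cs_lt (i : Fin n) : ((i.castSucc : Fin (n + 1)) : ℕ) < n := by
  simpa using i.isLt

lemma cs_mk (i : Fin n) (h : ((i.castSucc : Fin (n + 1)) : ℕ) < n) :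
    (⟨((i.castSucc : Fin (n + 1)) : ℕ), h⟩ : Fin n) = i := by
  ext; simp

lemma last_not_lt : ¬ (((Fin.last n) : ℕ) < n) := by simp

lemma sig_cs (i : Fin n) (k : (Fin n → ℕ) × ℤ) :
    sig n i.castSucc k = (Function.update k.1 i (k.1 i + 1), k.2) := by
  rw [sig, dif_pos (cs_lt i), cs_mk]

lemma sig_last (k : (Fin n → ℕ) × ℤ) : sig n (Fin.last n) k = (k.1, k.2 + 1) := by
  rw [sig, dif_neg last_not_lt]

lemma tau_cs (i : Fin n) (k : (Fin n → ℕ) × ℤ) :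
    tau n i.castSucc k = (if k.1 i = 0 then none
      else some (Function.update k.1 i (k.1 i - 1), k.2)) := by
  rw [tau, dif_pos (cs_lt i), cs_mk]

lemma tau_last (k : (Fin n → ℕ) × ℤ) : tau n (Fin.last n) k = some (k.1, k.2 - 1) := by
  rw [tau, dif_neg last_not_lt]

lemma wt_cs (i : Fin n) (k : (Fin n → ℕ) × ℤ) :
    wt n q i.castSucc k = q ^ (Sf n k.1 (i : ℕ)) * Real.sqrt (1 - q ^ (2 * (k.1 i + 1))) := by
  rw [wt, dif_pos (cs_lt i), cs_mk]
  simp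

lemma wt_last (k : (Fin n → ℕ) × ℤ) : wt n q (Fin.last n) k = q ^ (Sf n k.1 n) := by
  rw [wt, dif_neg last_not_lt]

lemma Sf_zero (x : Fin n → ℕ) : Sf n x 0 = 0 := by simp [Sf]

lemma Sf_update_of_le {i : Fin n} {t : ℕ} (h : t ≤ (i : ℕ)) (x : Fin n → ℕ) (a : ℕ) :
    Sf n (Function.update x i a) t = Sf n x t := by
  refine Finset.sum_congr rfl fun m hm => ?_
  simp only [mem_filter] at hm
  have hmi : m ≠ i := by
    rintro rfl
    omega
  exact Function.update_of_ne hmi a x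

lemma Sf_update_add {i : Fin n} {t : ℕ} (h : (i : ℕ) < t) (x : Fin n → ℕ) (a : ℕ) :
    Sf n (Function.update x i a) t + x i = Sf n x t + a := by
  unfold Sf
  have hi : i ∈ univ.filter (fun m : Fin n => (m : ℕ) < t) := by simp [h]
  rw [Finset.sum_update_of_mem hi, Finset.sum_eq_sum_sdiff_singleton_add hi x]
  ring

lemma Sf_update_succ {i : Fin n} {t : ℕ} (h : (i : ℕ) < t) (x : Fin n → ℕ) :
    Sf n (Function.update x i (x i + 1)) t = Sf n x t + 1 := by
  have := Sf_update_add h x (x i + 1)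
  omega

lemma Sf_succ {t : ℕ} (h : t < n) (x : Fin n → ℕ) :
    Sf n x (t + 1) = Sf n x t + x ⟨t, h⟩ := by
  unfold Sf
  rw [show (univ.filter fun m : Fin n => (m : ℕ) < t + 1) =
      insert ⟨t, h⟩ (univ.filter fun m : Fin n => (m : ℕ) < t) by
    ext m
    simp only [mem_filter, mem_univ, true_and, mem_insert, Fin.ext_iff]
    omega]
  rw [Finset.sum_insert (by simp)]
  ring

lemma Sf_ge {t : ℕ} (h : n ≤ t) (x : Fin n → ℕ) : Sf n x t = ∑ m, x m := by
  unfold Sf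
  apply Finset.sum_congr _ (fun _ _ => rfl)
  ext m
  simp only [mem_filter, mem_univ, true_and, iff_true]
  exact lt_of_lt_of_le m.isLt h

lemma Sf_Iio (i : Fin n) (x : Fin n → ℕ) : Sf n x (i : ℕ) = ∑ m ∈ Iio i, x m := by
  unfold Sf
  apply Finset.sum_congr _ (fun _ _ => rfl)
  ext m
  simp only [mem_filter, mem_univ, true_and, mem_Iio, Fin.lt_def]

end lems

section spec

variable {n : ℕ} {q : ℝ}

lemma q_pow_le_one (hq0 : 0 < q) (hq1 : q < 1) (s : ℕ) : q ^ s ≤ 1 :=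
  pow_le_one₀ hq0.le hq1.le

lemma sqrt_arg_nonneg (hq0 : 0 < q) (hq1 : q < 1) (s : ℕ) : 0 ≤ 1 - q ^ s :=
  sub_nonneg.2 (q_pow_le_one hq0 hq1 s)

lemma wt_nonneg (hq0 : 0 < q) (i : Fin (n + 1)) (k : (Fin n → ℕ) × ℤ) : 0 ≤ wt n q i k := by
  unfold wt
  split_ifs <;> positivity

lemma wt_le_one (hq0 : 0 < q) (hq1 : q < 1) (i : Fin (n + 1)) (k : (Fin n → ℕ) × ℤ) :
    wt n q i k ≤ 1 := by
  unfold wt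
  split_ifs with h
  · refine mul_le_one₀ (q_pow_le_one hq0 hq1 _) (Real.sqrt_nonneg _) ?_
    rw [Real.sqrt_le_one]
    have : 0 ≤ q ^ (2 * (k.1 ⟨i, h⟩ + 1)) := by positivity
    linarith
  · exact q_pow_le_one hq0 hq1 _

lemma tau_sig (i : Fin (n + 1)) (k : (Fin n → ℕ) × ℤ) : tau n i (sig n i k) = some k := by
  rcases Fin.eq_castSucc_or_eq_last i with ⟨i', rfl⟩ | rfl
  · rw [sig_cs, tau_cs]
    dsimp only
    rw [if_neg (by simp)]
    rw [Function.update_self, Function.update_idem]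
    have h2 : k.1 i' + 1 - 1 = k.1 i' := by omega
    rw [h2, Function.update_eq_self]
  · rw [sig_last, tau_last]
    simp

lemma sig_tau (i : Fin (n + 1)) : ∀ (k m : (Fin n → ℕ) × ℤ),
    tau n i k = some m → sig n i m = k := by
  intro k m hm
  rcases Fin.eq_castSucc_or_eq_last i with ⟨i', rfl⟩ | rfl
  · rw [tau_cs] at hm
    by_cases h0 : k.1 i' = 0
    · rw [if_pos h0] at hm; exact absurd hm (by simp)
    · rw [if_neg h0] at hm
      obtain rfl := (Option.some.injEq _ _ ▸ hm).symm
      rw [sig_cs]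
      dsimp only
      rw [Function.update_self, Function.update_idem]
      have h2 : k.1 i' - 1 + 1 = k.1 i' := Nat.succ_pred_eq_of_pos (Nat.pos_of_ne_zero h0)
      rw [h2, Function.update_eq_self]
  · rw [tau_last] at hm
    obtain rfl := (Option.some.injEq _ _ ▸ hm).symm
    rw [sig_last]
    simp

/-- The quantum-sphere shift operators satisfy the `Spec`. -/
lemma spec (hq0 : 0 < q) (hq1 : q < 1) (i : Fin (n + 1)) :
    QAux.Spec (sig n i) (tau n i) (wt n q i) where
  hu0 := wt_nonneg hq0 i
  hu1 := wt_le_one hq0 hq1 i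
  hτσ := tau_sig i
  hστ := sig_tau i

end spec

section Llems

variable {n : ℕ} {q : ℝ}

lemma wt_sig_lt (i : Fin n) (j : Fin (n + 1)) (hij : (i : ℕ) < (j : ℕ))
    (k : (Fin n → ℕ) × ℤ) :
    wt n q j (sig n i.castSucc k) = q * wt n q j k := by
  rw [sig_cs]
  rcases Fin.eq_castSucc_or_eq_last j with ⟨j', rfl⟩ | rfl
  · have hij' : (i : ℕ) < (j' : ℕ) := by simpa using hij
    have hne : j' ≠ i := fun h => by subst h; omega
    rw [wt_cs, wt_cs]
    dsimp only
    rw [Sf_update_succ hij', Function.update_of_ne hne]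
    rw [pow_succ]
    ring
  · rw [wt_last, wt_last]
    dsimp only
    rw [Sf_update_succ i.isLt, pow_succ]
    ring

lemma wt_sig_gt (i : Fin n) (j : Fin (n + 1)) (hij : (i : ℕ) < (j : ℕ))
    (k : (Fin n → ℕ) × ℤ) :
    wt n q i.castSucc (sig n j k) = wt n q i.castSucc k := by
  rcases Fin.eq_castSucc_or_eq_last j with ⟨j', rfl⟩ | rfl
  · have hij' : (i : ℕ) < (j' : ℕ) := by simpa using hij
    have hne : i ≠ j' := fun h => by subst h; omega
    rw [sig_cs, wt_cs, wt_cs]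
    dsimp only
    rw [Sf_update_of_le (le_of_lt hij'), Function.update_of_ne hne]
  · rw [sig_last, wt_cs, wt_cs]

lemma sig_comm (i j : Fin (n + 1)) (hij : i ≠ j) (k : (Fin n → ℕ) × ℤ) :
    sig n i (sig n j k) = sig n j (sig n i k) := by
  rcases Fin.eq_castSucc_or_eq_last i with ⟨i', rfl⟩ | rfl <;>
    rcases Fin.eq_castSucc_or_eq_last j with ⟨j', rfl⟩ | rfl
  · have hne : i' ≠ j' := fun h => hij (by rw [h])
    rw [sig_cs, sig_cs, sig_cs, sig_cs]
    dsimp only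
    rw [Function.update_of_ne hne.symm, Function.update_of_ne hne,
      Function.update_comm hne]
  · rw [sig_last, sig_cs, sig_cs, sig_last]
  · rw [sig_cs, sig_last, sig_last, sig_cs]
  · exact absurd rfl hij

lemma tau_sig_comm (i j : Fin (n + 1)) (hij : i ≠ j) (k : (Fin n → ℕ) × ℤ) :
    tau n j (sig n i k) = Option.map (sig n i) (tau n j k) := by
  rcases Fin.eq_castSucc_or_eq_last i with ⟨i', rfl⟩ | rfl <;>
    rcases Fin.eq_castSucc_or_eq_last j with ⟨j', rfl⟩ | rfl
  · have hne : i' ≠ j' := fun h => hij (by rw [h])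
    rw [sig_cs, tau_cs, tau_cs]
    dsimp only
    simp only [Function.update_of_ne hne.symm]
    by_cases h0 : k.1 j' = 0
    · rw [if_pos h0, if_pos h0, Option.map_none]
    · rw [if_neg h0, if_neg h0, Option.map_some, sig_cs]
      dsimp only
      rw [Function.update_of_ne hne]
      rw [Function.update_comm hne.symm]
  · rw [sig_cs, tau_last, tau_last, Option.map_some, sig_cs]
  · rw [sig_last, tau_cs, tau_cs]
    dsimp only
    by_cases h0 : k.1 j' = 0
    · rw [if_pos h0, if_pos h0, Option.map_none]
    · rw [if_neg h0, if_neg h0, Option.map_some, sig_last]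
  · exact absurd rfl hij

lemma Gf_zero (x : Fin n → ℕ) : Gf n q x 0 = 1 := by
  simp [Gf, Sf_zero]

lemma Gf_top (x : Fin n → ℕ) : Gf n q x (n + 1) = 0 := by
  simp [Gf]

lemma wt_sq (hq0 : 0 < q) (hq1 : q < 1) (i : Fin (n + 1)) (k : (Fin n → ℕ) × ℤ) :
    wt n q i k ^ 2 = Gf n q k.1 (i : ℕ) - q ^ 2 * Gf n q k.1 ((i : ℕ) + 1) := by
  rcases Fin.eq_castSucc_or_eq_last i with ⟨i', rfl⟩ | rfl
  · rw [wt_cs]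
    have h1 : ((i'.castSucc : Fin (n + 1)) : ℕ) = (i' : ℕ) := by simp
    rw [h1]
    rw [Gf, if_pos (le_of_lt i'.isLt), Gf, if_pos (show (i':ℕ) + 1 ≤ n by omega)]
    rw [Sf_succ i'.isLt]
    have h2 : (⟨(i' : ℕ), i'.isLt⟩ : Fin n) = i' := by ext; rfl
    rw [h2]
    rw [mul_pow, Real.sq_sqrt (sqrt_arg_nonneg hq0 hq1 _)]
    ring
  · rw [wt_last]
    have h1 : ((Fin.last n : Fin (n + 1)) : ℕ) = n := rfl
    rw [h1, Gf, if_pos le_rfl, Gf, if_neg (by omega)]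
    ring

lemma tau_elim_sq (hq0 : 0 < q) (hq1 : q < 1) (i : Fin (n + 1)) (k : (Fin n → ℕ) × ℤ) :
    ((tau n i k).elim 0 fun m => wt n q i m ^ 2)
      = Gf n q k.1 (i : ℕ) - Gf n q k.1 ((i : ℕ) + 1) := by
  rcases Fin.eq_castSucc_or_eq_last i with ⟨i', rfl⟩ | rfl
  · rw [tau_cs]
    have h1 : ((i'.castSucc : Fin (n + 1)) : ℕ) = (i' : ℕ) := by simp
    rw [h1, Gf, if_pos (le_of_lt i'.isLt), Gf, if_pos (show (i':ℕ) + 1 ≤ n by omega), Sf_succ i'.isLt]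
    have h2 : (⟨(i' : ℕ), i'.isLt⟩ : Fin n) = i' := by ext; rfl
    rw [h2]
    by_cases h0 : k.1 i' = 0
    · rw [if_pos h0, h0]
      simp
    · rw [if_neg h0]
      simp only [Option.elim_some]
      rw [wt_cs]
      dsimp only
      rw [Sf_update_of_le le_rfl, Function.update_self]
      have h3 : k.1 i' - 1 + 1 = k.1 i' := Nat.succ_pred_eq_of_pos (Nat.pos_of_ne_zero h0)
      rw [h3, mul_pow, Real.sq_sqrt (sqrt_arg_nonneg hq0 hq1 _)]
      ring
  · rw [tau_last]
    simp only [Option.elim_some]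
    rw [wt_last]
    have h1 : ((Fin.last n : Fin (n + 1)) : ℕ) = n := rfl
    rw [h1, Gf, if_pos le_rfl, Gf, if_neg (by omega)]
    dsimp only
    ring

lemma sum_Ioi_tele (F : ℕ → ℝ) (i : Fin (n + 1)) :
    ∑ j ∈ Ioi i, (F (j : ℕ) - F ((j : ℕ) + 1)) = F ((i : ℕ) + 1) - F (n + 1) := by
  have h1 : (Ioi i : Finset (Fin (n + 1))) = univ.filter fun j => i < j := by
    ext j; simp
  rw [h1, Finset.sum_filter]
  have h2 : ∀ j : Fin (n + 1), (if i < j then F (j : ℕ) - F ((j : ℕ) + 1) else 0)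
      = (fun t : ℕ => if (i : ℕ) < t then F t - F (t + 1) else 0) (j : ℕ) := by
    intro j
    simp only [Fin.lt_def]
  rw [Finset.sum_congr rfl (fun j _ => h2 j)]
  rw [Fin.sum_univ_eq_sum_range (fun t => if (i : ℕ) < t then F t - F (t + 1) else 0) (n + 1)]
  rw [← Finset.sum_filter]
  have h3 : (Finset.range (n + 1)).filter (fun t => (i : ℕ) < t)
      = Finset.Ico ((i : ℕ) + 1) (n + 1) := by
    ext t
    simp only [mem_filter, Finset.mem_range, Finset.mem_Ico]
    omega
  rw [h3, Finset.sum_Ico_eq_sum_range]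
  have h4 : ∑ t ∈ Finset.range (n + 1 - ((i : ℕ) + 1)),
      (F ((i : ℕ) + 1 + t) - F ((i : ℕ) + 1 + t + 1))
      = (fun s => F ((i : ℕ) + 1 + s)) 0
        - (fun s => F ((i : ℕ) + 1 + s)) (n + 1 - ((i : ℕ) + 1)) :=
    Finset.sum_range_sub' (fun s => F ((i : ℕ) + 1 + s)) _
  rw [h4]
  have hle : (i : ℕ) + 1 ≤ n + 1 := by omega
  show F ((i : ℕ) + 1 + 0) - F ((i : ℕ) + 1 + (n + 1 - ((i : ℕ) + 1))) = _
  rw [Nat.add_zero, Nat.add_sub_cancel' hle]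

lemma sum_univ_tele (F : ℕ → ℝ) :
    ∑ j : Fin (n + 1), (F (j : ℕ) - F ((j : ℕ) + 1)) = F 0 - F (n + 1) := by
  rw [Fin.sum_univ_eq_sum_range (fun t => F t - F (t + 1)) (n + 1),
    Finset.sum_range_sub' F (n + 1)]

end Llems

section cross

variable {n : ℕ} {q : ℝ}

lemma exists_castSucc_of_lt {i j : Fin (n + 1)} (h : i < j) :
    ∃ i₀ : Fin n, i = i₀.castSucc ∧ (i₀ : ℕ) < (j : ℕ) := by
  have hin : (i : ℕ) < n := lt_of_lt_of_le h (Nat.lt_succ_iff.mp j.isLt)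
  exact ⟨⟨i, hin⟩, by ext; simp, h⟩

lemma wt_cross (i j : Fin (n + 1)) (hij : i ≠ j) (m : (Fin n → ℕ) × ℤ) :
    wt n q i (sig n j m) * wt n q j (sig n i m) = q * (wt n q i m * wt n q j m) := by
  rcases lt_or_gt_of_ne hij with hlt | hlt
  · obtain ⟨i₀, rfl, hv⟩ := exists_castSucc_of_lt hlt
    rw [wt_sig_gt i₀ j hv, wt_sig_lt i₀ j hv]
    ring
  · obtain ⟨j₀, rfl, hv⟩ := exists_castSucc_of_lt hlt
    rw [wt_sig_gt j₀ i hv, wt_sig_lt j₀ i hv]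
    ring

lemma ZZstar_coord (hq0 : 0 < q) (hq1 : q < 1) (j : Fin (n + 1))
    (f : lp (fun _ : (Fin n → ℕ) × ℤ => ℂ) 2) (k : (Fin n → ℕ) × ℤ) :
    ((QAux.Top (spec hq0 hq1 j)) ((QAux.Sop (spec hq0 hq1 j)) f) : ((Fin n → ℕ) × ℤ) → ℂ) k
      = ((Gf n q k.1 (j : ℕ) - Gf n q k.1 ((j : ℕ) + 1) : ℝ) : ℂ) * f k := by
  simp only [QAux.Top_apply, QAux.Sop_apply]
  have h2 := tau_elim_sq hq0 hq1 j k
  cases h1 : tau n j k with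
  | none =>
    rw [h1] at h2
    simp only [Option.elim_none] at h2 ⊢
    rw [← h2]
    simp
  | some m =>
    have hk := sig_tau j k m h1
    rw [h1] at h2
    simp only [Option.elim_some] at h2 ⊢
    rw [hk, ← h2]
    push_cast
    ring

end cross

end QSphereProof

open QSphereProof QAux in
/-- For `0 < q < 1` there exist bounded operators `Z 0, …, Z n` on
`ℓ²(ℕⁿ × ℤ)` acting on the standard basis vectors by the Vaksman–Soibelman formulas and
satisfying the `q`-sphere relations in `B(ℓ²(ℕⁿ × ℤ))`. -/
theorem qSphere_representation_exists (n : ℕ) (q : ℝ) (hq0 : 0 < q) (hq1 : q < 1) :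
    ∃ Z : Fin (n + 1) → (QSphereL2 n →L[ℂ] QSphereL2 n),
      (∀ (i : Fin n) (k : (Fin n → ℕ) × ℤ),
        Z i.castSucc (QSphereL2.e k) =
          (((q ^ (∑ m ∈ Finset.Iio i, k.1 m) *
              Real.sqrt (1 - q ^ (2 * (k.1 i + 1))) : ℝ)) : ℂ) •
            QSphereL2.e (Function.update k.1 i (k.1 i + 1), k.2)) ∧
      (∀ k : (Fin n → ℕ) × ℤ,
        Z (Fin.last n) (QSphereL2.e k) =
          ((q ^ (∑ m : Fin n, k.1 m) : ℝ) : ℂ) • QSphereL2.e (k.1, k.2 + 1)) ∧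
      (∀ i j : Fin (n + 1), i < j → Z j * Z i = (q : ℂ) • (Z i * Z j)) ∧
      (∀ i j : Fin (n + 1), i ≠ j → star (Z i) * Z j = (q : ℂ) • (Z j * star (Z i))) ∧
      (∀ i : Fin (n + 1), star (Z i) * Z i =
        Z i * star (Z i) + ((1 - q ^ 2 : ℝ) : ℂ) • ∑ j ∈ Finset.Ioi i, Z j * star (Z j)) ∧
      (∑ j : Fin (n + 1), Z j * star (Z j) = 1) := by
  refine ⟨fun i => QAux.Top (spec hq0 hq1 i), ?_, ?_, ?_, ?_, ?_, ?_⟩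
  · -- action of `Z i` for `i < n`
    intro i k
    rw [show QSphereL2.e k = lp.single 2 k (1:ℂ) from rfl,
      QAux.Top_single (spec hq0 hq1 i.castSucc) k, sig_cs, wt_cs, Sf_Iio]
  · -- action of `Z n`
    intro k
    rw [show QSphereL2.e k = lp.single 2 k (1:ℂ) from rfl,
      QAux.Top_single (spec hq0 hq1 (Fin.last n)) k, sig_last, wt_last, Sf_ge le_rfl]
  · -- commutation relation
    intro i j hij
    have hne : i ≠ j := ne_of_lt hij
    obtain ⟨i₀, hics, hv⟩ := exists_castSucc_of_lt hij
    refine ContinuousLinearMap.ext fun f => ?_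
    refine lp.ext (funext fun k => ?_)
    simp only [ContinuousLinearMap.mul_apply, ContinuousLinearMap.smul_apply,
      lp.coeFn_smul, Pi.smul_apply, smul_eq_mul, QAux.Top_apply]
    cases h1 : tau n j k with
    | none =>
      cases h2 : tau n i k with
      | none => simp
      | some m =>
        have h3 : tau n j m = none := by
          have hcomm := tau_sig_comm i j hne m
          rw [sig_tau i k m h2, h1] at hcomm
          exact Option.map_eq_none_iff.mp hcomm.symm
        simp [h3]
    | some m =>
      have hk := sig_tau j k m h1
      cases h2 : tau n i m with
      | none =>
        have h3 : tau n i k = none := by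
          rw [← hk, tau_sig_comm j i hne.symm m, h2]
          rfl
        simp [h2, h3]
      | some m' =>
        have hm := sig_tau i m m' h2
        have h3 : tau n i k = some (sig n j m') := by
          rw [← hk, tau_sig_comm j i hne.symm m, h2]
          rfl
        have h4 : tau n j (sig n j m') = some m' := tau_sig j m'
        simp only [h2, h3, h4, Option.elim_some]
        rw [← hm, hics]
        rw [wt_sig_lt i₀ j (by simpa [← hics] using hv) m']
        rw [wt_sig_gt i₀ j (by simpa [← hics] using hv) m']
        push_cast
        ring
  · -- star commutation relation
    intro i j hij
    refine ContinuousLinearMap.ext fun f => ?_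
    refine lp.ext (funext fun k => ?_)
    simp only [ContinuousLinearMap.mul_apply, ContinuousLinearMap.smul_apply,
      QAux.star_Top, lp.coeFn_smul, Pi.smul_apply, smul_eq_mul,
      QAux.Top_apply, QAux.Sop_apply]
    rw [tau_sig_comm i j hij k]
    cases h1 : tau n j k with
    | none => simp
    | some m =>
      have hk := sig_tau j k m h1
      simp only [Option.map_some, Option.elim_some]
      rw [← hk]
      have hcross := wt_cross (q := q) i j hij m
      have hc : ((wt n q i (sig n j m) : ℝ) : ℂ) * ((wt n q j (sig n i m) : ℝ) : ℂ)
          = (q : ℂ) * ((wt n q i m : ℝ) : ℂ) * ((wt n q j m : ℝ) : ℂ) := by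
        rw [← Complex.ofReal_mul, hcross]
        push_cast
        ring
      rw [← mul_assoc, hc]
      ring
  · -- sphere relation
    intro i
    refine ContinuousLinearMap.ext fun f => ?_
    refine lp.ext (funext fun k => ?_)
    simp only [ContinuousLinearMap.mul_apply, ContinuousLinearMap.add_apply,
      ContinuousLinearMap.smul_apply, ContinuousLinearMap.sum_apply,
      QAux.star_Top, lp.coeFn_add, Pi.add_apply, lp.coeFn_smul, Pi.smul_apply,
      smul_eq_mul, lp.coeFn_sum, Finset.sum_apply]
    rw [Finset.sum_congr rfl (fun j _ => ZZstar_coord hq0 hq1 j f k)]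
    rw [ZZstar_coord hq0 hq1 i f k]
    simp only [QAux.Sop_apply, QAux.Top_apply]
    rw [tau_sig i k]
    simp only [Option.elim_some]
    rw [← Finset.sum_mul, ← Complex.ofReal_sum, sum_Ioi_tele (Gf n q k.1) i, Gf_top]
    have hsq := wt_sq hq0 hq1 i k
    have : (wt n q i k : ℂ) * ((wt n q i k : ℂ) * f k)
        = ((wt n q i k ^ 2 : ℝ) : ℂ) * f k := by
      push_cast
      ring
    rw [this, hsq]
    push_cast
    ring
  · -- sum relation
    refine ContinuousLinearMap.ext fun f => ?_
    refine lp.ext (funext fun k => ?_)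
    simp only [ContinuousLinearMap.sum_apply, ContinuousLinearMap.mul_apply,
      QAux.star_Top, lp.coeFn_sum, Finset.sum_apply, ContinuousLinearMap.one_apply]
    rw [Finset.sum_congr rfl (fun j _ => ZZstar_coord hq0 hq1 j f k)]
    rw [← Finset.sum_mul, ← Complex.ofReal_sum, sum_univ_tele (Gf n q k.1), Gf_zero, Gf_top]
    simp
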